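/- For every real number α with α ∉ 4ℤ and α ∉ 1 + 4ℤ, the matrix product Z(α) · Y(α) equals (√2/(cot(πα/4) − 1)) · I₄. (This is the bubble-pop identity Y† Y = B^{α1}_{α−1} · Id for the splitting map of the anyon (α−1) into the pair (α, 1).) -/

import Mathlib

open Complex Matrix

/-- Complex powers of `q = e^{iπ/4}`: `q^z := e^{iπz/4}`. -/
noncomputable def qp (z : ℂ) : ℂ := Complex.exp (Complex.I * Real.pi * z / 4)

/-- The `8×4` matrix of the splitting map `Y^{α1}_{α−1} : (α−1) → α ⊗ 1` in the
non-semisimple Ising model at `r = 4`, rows indexed lexicographically by `(m, ε)` with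
`m ∈ {0,1,2,3}`, `ε ∈ {0,1}`. -/
noncomputable def Ymat (α : ℝ) : Matrix (Fin 8) (Fin 4) ℂ :=
  !![0, 0, 0, 0;
     1, 0, 0, 0;
     (qp 2 - 1) / (qp (α + 1) - qp (3 - α)), 0, 0, 0;
     0, (-qp (2 * α + 2) + qp 4 - qp 2 + 1) / (qp 4 - qp (2 * α + 2)), 0, 0;
     0, (qp 2 - 1) / (qp (α + 1) - qp (3 - α)), 0, 0;
     0, 0, (1 - qp (2 * α + 2)) / (qp 4 - qp (2 * α + 2)), 0;
     0, 0, (qp 2 - 1) / (qp (α + 1) - qp (3 - α)), 0;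
     0, 0, 0, (-qp (2 * α + 2) - qp 6 + qp 4 + 1) / (qp 4 - qp (2 * α + 2))]

/-- The `4×8` matrix of the Hermitian adjoint `(Y^{α1}_{α−1})†`. -/
noncomputable def Zmat (α : ℝ) : Matrix (Fin 4) (Fin 8) ℂ :=
  !![0, -qp 1, -qp (2 - α), 0, 0, 0, 0, 0;
     0, 0, 0, -qp 1, qp (-α) * (1 - qp 2), 0, 0, 0;
     0, 0, 0, 0, 0, -qp 1, qp (-α), 0;
     0, 0, 0, 0, 0, 0, 0, -qp 1]

lemma qp_add (a b : ℂ) : qp (a + b) = qp a * qp b := by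
  rw [qp, qp, qp, ← Complex.exp_add]; ring_nf

lemma qp_ne_zero (a : ℂ) : qp a ≠ 0 := Complex.exp_ne_zero _

lemma qp_neg (a : ℂ) : qp (-a) = (qp a)⁻¹ := by
  rw [qp, qp, ← Complex.exp_neg]; ring_nf

lemma qp_two : qp 2 = I := by
  rw [qp, show (Complex.I * Real.pi * 2 / 4) = (Real.pi/2 : ℝ) * I by push_cast; ring,
    Complex.exp_mul_I]
  push_cast
  rw [Complex.cos_pi_div_two, Complex.sin_pi_div_two]; ring

lemma qp_sq (a : ℂ) : qp a ^ 2 = qp (2 * a) := by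
  rw [show (2*a) = a + a by ring, qp_add]; ring

lemma qp_one_sq : qp 1 ^ 2 = I := by rw [qp_sq]; norm_num [qp_two]

lemma qp_four : qp 4 = -1 := by
  rw [show (4:ℂ) = 2 + 2 by norm_num, qp_add, qp_two]
  simp [Complex.I_mul_I]

lemma qp_six : qp 6 = -I := by
  rw [show (6:ℂ) = 4 + 2 by norm_num, qp_add, qp_four, qp_two]; ring

lemma qp_sqrt2 : (Real.sqrt 2 : ℂ) = qp 1 * (1 - I) := by
  rw [qp, show (Complex.I * Real.pi * 1 / 4) = (Real.pi/4 : ℝ) * I by push_cast; ring,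
    Complex.exp_mul_I]
  rw [← Complex.ofReal_cos, ← Complex.ofReal_sin, Real.cos_pi_div_four, Real.sin_pi_div_four]
  push_cast
  linear_combination ((Real.sqrt 2 : ℂ) / 2) * Complex.I_sq

lemma qp_real_eq_one_iff (x : ℝ) : qp x = 1 ↔ ∃ n : ℤ, x = 8 * n := by
  rw [qp, Complex.exp_eq_one_iff]
  constructor
  · rintro ⟨n, hn⟩
    refine ⟨n, ?_⟩
    have hπ : (Real.pi : ℂ) ≠ 0 := Complex.ofReal_ne_zero.2 Real.pi_ne_zero
    have key : ((x - 8 * n : ℝ) : ℂ) * (Complex.I * Real.pi / 4) = 0 := by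
      push_cast
      linear_combination hn
    have := mul_eq_zero.1 key
    rcases this with h | h
    · have : (x - 8 * n : ℝ) = 0 := by exact_mod_cast h
      linarith
    · exfalso
      apply Complex.I_ne_zero
      field_simp at h
      simp [hπ, Real.pi_ne_zero] at h
  · rintro ⟨n, rfl⟩
    exact ⟨n, by push_cast; ring⟩

lemma qp_eq_qp {x y : ℂ} (h : qp x = qp y) : qp (x - y) = 1 := by
  rw [show x - y = x + (-y) by ring, qp_add, qp_neg, h, mul_inv_cancel₀ (qp_ne_zero y)]



variable (t Q : ℂ)

lemma G1 (ht0 : t ≠ 0) (hQ0 : Q ≠ 0) (hQ2 : Q ^ 2 = I) (ht2 : t ^ 2 ≠ I) :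
    -Q + -(I * t⁻¹ * ((I - 1) / (t * Q - I * Q * t⁻¹))) =
      Q * (1 - I) * ((t⁻¹ - t) * I / 2) / ((t + t⁻¹) / 2 - (t⁻¹ - t) * I / 2) := by
  have hQ4 : Q ^ 4 = -1 := by
    rw [show Q ^ 4 = (Q ^ 2) ^ 2 by ring, hQ2, Complex.I_sq]
  have htQ : t ^ 2 - Q ^ 2 ≠ 0 := sub_ne_zero.2 (by rw [hQ2]; exact ht2)
  have h1Q : 1 + Q ^ 2 ≠ 0 := by
    rw [hQ2]
    intro hc
    have : I = -1 := by linear_combination hc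
    simp [Complex.ext_iff] at this
  have hA : Q * t ^ 3 - Q ^ 3 * t ≠ 0 := by
    have : Q * t ^ 3 - Q ^ 3 * t = Q * t * (t ^ 2 - Q ^ 2) := by ring
    rw [this]
    exact mul_ne_zero (mul_ne_zero hQ0 ht0) htQ
  have hB : 1 - Q ^ 2 + Q ^ 2 * t ^ 2 + t ^ 2 ≠ 0 := by
    have : 1 - Q ^ 2 + Q ^ 2 * t ^ 2 + t ^ 2 = (1 + Q ^ 2) * (t ^ 2 - Q ^ 2) + (Q ^ 4 + 1) := by
      ring
    rw [this, hQ4]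
    simpa using mul_ne_zero h1Q htQ
  rw [show I = Q ^ 2 from hQ2.symm]
  field_simp [hA, hB]
  have hD1 : t * (t * Q * t - Q ^ 2 * Q) ≠ 0 := by
    have : t * (t * Q * t - Q ^ 2 * Q) = Q * t * (t ^ 2 - Q ^ 2) := by ring
    rw [this]; exact mul_ne_zero (mul_ne_zero hQ0 ht0) htQ
  have hD2 : t * t + 1 - (1 - t * t) * Q ^ 2 ≠ 0 := by
    have : t * t + 1 - (1 - t * t) * Q ^ 2 = (1 + Q ^ 2) * (t ^ 2 - Q ^ 2) + (Q ^ 4 + 1) := by ring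
    rw [this, hQ4]
    simpa using mul_ne_zero h1Q htQ
  have hD2' : t ^ 2 + 1 - Q ^ 2 * (1 - t ^ 2) ≠ 0 := by convert hD2 using 1; ring
  rw [eq_div_iff hD2']
  linear_combination (1 - Q ^ 2 + t ^ 2 * Q ^ 2 - t ^ 4) * hQ4

lemma G2 (ht0 : t ≠ 0) (hQ0 : Q ≠ 0) (hQ2 : Q ^ 2 = I) (ht2 : t ^ 2 ≠ I) :
    -(Q * ((-(t ^ 2 * I) + -1 - I + 1) / (-1 - t ^ 2 * I))) +
        t⁻¹ * (1 - I) * ((I - 1) / (t * Q - I * Q * t⁻¹)) =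
      Q * (1 - I) * ((t⁻¹ - t) * I / 2) / ((t + t⁻¹) / 2 - (t⁻¹ - t) * I / 2) := by
  have hQ4 : Q ^ 4 = -1 := by
    rw [show Q ^ 4 = (Q ^ 2) ^ 2 by ring, hQ2, Complex.I_sq]
  have htQ : t ^ 2 - Q ^ 2 ≠ 0 := sub_ne_zero.2 (by rw [hQ2]; exact ht2)
  have h1Q : 1 + Q ^ 2 ≠ 0 := by
    rw [hQ2]
    intro hc
    have : I = -1 := by linear_combination hc
    simp [Complex.ext_iff] at this
  rw [show I = Q ^ 2 from hQ2.symm]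
  have hA : Q * t ^ 3 - Q ^ 3 * t ≠ 0 := by
    have : Q * t ^ 3 - Q ^ 3 * t = Q * t * (t ^ 2 - Q ^ 2) := by ring
    rw [this]; exact mul_ne_zero (mul_ne_zero hQ0 ht0) htQ
  have hB : 1 - Q ^ 2 + Q ^ 2 * t ^ 2 + t ^ 2 ≠ 0 := by
    have : 1 - Q ^ 2 + Q ^ 2 * t ^ 2 + t ^ 2 = (1 + Q ^ 2) * (t ^ 2 - Q ^ 2) + (Q ^ 4 + 1) := by ring
    rw [this, hQ4]
    simpa using mul_ne_zero h1Q htQ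
  have hC : (-1 : ℂ) - t ^ 2 * Q ^ 2 ≠ 0 := by
    have : (-1 : ℂ) - t ^ 2 * Q ^ 2 = -(Q ^ 2 * (t ^ 2 - Q ^ 2) + (Q ^ 4 + 1)) := by ring
    rw [this, hQ4]
    simpa using mul_ne_zero (pow_ne_zero 2 hQ0) htQ
  field_simp [hA, hB, hC]
  have hD1 : t * (t * Q * t - Q ^ 2 * Q) ≠ 0 := by
    have : t * (t * Q * t - Q ^ 2 * Q) = Q * t * (t ^ 2 - Q ^ 2) := by ring
    rw [this]; exact mul_ne_zero (mul_ne_zero hQ0 ht0) htQ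
  have hD2 : t * t + 1 - (1 - t * t) * Q ^ 2 ≠ 0 := by
    have : t * t + 1 - (1 - t * t) * Q ^ 2 = (1 + Q ^ 2) * (t ^ 2 - Q ^ 2) + (Q ^ 4 + 1) := by ring
    rw [this, hQ4]
    simpa using mul_ne_zero h1Q htQ
  have hD2' : t ^ 2 + 1 - Q ^ 2 * (1 - t ^ 2) ≠ 0 := by convert hD2 using 1; ring
  have hC' : (-1 : ℂ) - Q ^ 2 * t ^ 2 ≠ 0 := by convert hC using 1; ring
  rw [neg_div', div_add' _ _ _ hC', div_eq_div_iff hC' hD2']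
  linear_combination (1 - 3 * Q ^ 2 + 2 * Q ^ 4 + t ^ 2 - 3 * t ^ 2 * Q ^ 4 + t ^ 2 * Q ^ 6
    + t ^ 4 * Q ^ 2 - t ^ 4 * Q ^ 6 + t ^ 6 * Q ^ 4) * hQ4

lemma G3 (ht0 : t ≠ 0) (hQ0 : Q ≠ 0) (hQ2 : Q ^ 2 = I) (ht2 : t ^ 2 ≠ I) :
    -(Q * ((1 - t ^ 2 * I) / (-1 - t ^ 2 * I))) + t⁻¹ * ((I - 1) / (t * Q - I * Q * t⁻¹)) =
      Q * (1 - I) * ((t⁻¹ - t) * I / 2) / ((t + t⁻¹) / 2 - (t⁻¹ - t) * I / 2) := by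
  have hQ4 : Q ^ 4 = -1 := by
    rw [show Q ^ 4 = (Q ^ 2) ^ 2 by ring, hQ2, Complex.I_sq]
  have htQ : t ^ 2 - Q ^ 2 ≠ 0 := sub_ne_zero.2 (by rw [hQ2]; exact ht2)
  have h1Q : 1 + Q ^ 2 ≠ 0 := by
    rw [hQ2]
    intro hc
    have : I = -1 := by linear_combination hc
    simp [Complex.ext_iff] at this
  rw [show I = Q ^ 2 from hQ2.symm]
  have hA : Q * t ^ 3 - Q ^ 3 * t ≠ 0 := by
    have : Q * t ^ 3 - Q ^ 3 * t = Q * t * (t ^ 2 - Q ^ 2) := by ring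
    rw [this]; exact mul_ne_zero (mul_ne_zero hQ0 ht0) htQ
  have hB : 1 - Q ^ 2 + Q ^ 2 * t ^ 2 + t ^ 2 ≠ 0 := by
    have : 1 - Q ^ 2 + Q ^ 2 * t ^ 2 + t ^ 2 = (1 + Q ^ 2) * (t ^ 2 - Q ^ 2) + (Q ^ 4 + 1) := by ring
    rw [this, hQ4]
    simpa using mul_ne_zero h1Q htQ
  have hC : (-1 : ℂ) - t ^ 2 * Q ^ 2 ≠ 0 := by
    have : (-1 : ℂ) - t ^ 2 * Q ^ 2 = -(Q ^ 2 * (t ^ 2 - Q ^ 2) + (Q ^ 4 + 1)) := by ring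
    rw [this, hQ4]
    simpa using mul_ne_zero (pow_ne_zero 2 hQ0) htQ
  field_simp [hA, hB, hC]
  have hD1 : t * Q * t - Q ^ 2 * Q ≠ 0 := by
    have : t * Q * t - Q ^ 2 * Q = Q * (t ^ 2 - Q ^ 2) := by ring
    rw [this]; exact mul_ne_zero hQ0 htQ
  have hD2 : t * t + 1 - (1 - t * t) * Q ^ 2 ≠ 0 := by
    have : t * t + 1 - (1 - t * t) * Q ^ 2 = (1 + Q ^ 2) * (t ^ 2 - Q ^ 2) + (Q ^ 4 + 1) := by ring
    rw [this, hQ4]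
    simpa using mul_ne_zero h1Q htQ
  have hD2' : t ^ 2 + 1 - Q ^ 2 * (1 - t ^ 2) ≠ 0 := by convert hD2 using 1; ring
  have hC' : (-1 : ℂ) - Q ^ 2 * t ^ 2 ≠ 0 := by convert hC using 1; ring
  rw [neg_div', div_add' _ _ _ hC', div_eq_div_iff hC' hD2']
  linear_combination (1 - 2 * Q ^ 2 + Q ^ 4 + t ^ 2 - t ^ 2 * Q ^ 4 + t ^ 2 * Q ^ 6
    - t ^ 4 * Q ^ 4 - t ^ 4 * Q ^ 6 + t ^ 6 * Q ^ 4) * hQ4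

lemma G4 (ht0 : t ≠ 0) (hQ0 : Q ≠ 0) (hQ2 : Q ^ 2 = I) (ht2 : t ^ 2 ≠ I) :
    -(Q * ((-(t ^ 2 * I) + I) / (-1 - t ^ 2 * I))) =
      Q * (1 - I) * ((t⁻¹ - t) * I / 2) / ((t + t⁻¹) / 2 - (t⁻¹ - t) * I / 2) := by
  have hQ4 : Q ^ 4 = -1 := by
    rw [show Q ^ 4 = (Q ^ 2) ^ 2 by ring, hQ2, Complex.I_sq]
  have htQ : t ^ 2 - Q ^ 2 ≠ 0 := sub_ne_zero.2 (by rw [hQ2]; exact ht2)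
  have h1Q : 1 + Q ^ 2 ≠ 0 := by
    rw [hQ2]
    intro hc
    have : I = -1 := by linear_combination hc
    simp [Complex.ext_iff] at this
  rw [show I = Q ^ 2 from hQ2.symm]
  have hA : Q * t ^ 3 - Q ^ 3 * t ≠ 0 := by
    have : Q * t ^ 3 - Q ^ 3 * t = Q * t * (t ^ 2 - Q ^ 2) := by ring
    rw [this]; exact mul_ne_zero (mul_ne_zero hQ0 ht0) htQ
  have hB : 1 - Q ^ 2 + Q ^ 2 * t ^ 2 + t ^ 2 ≠ 0 := by
    have : 1 - Q ^ 2 + Q ^ 2 * t ^ 2 + t ^ 2 = (1 + Q ^ 2) * (t ^ 2 - Q ^ 2) + (Q ^ 4 + 1) := by ring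
    rw [this, hQ4]
    simpa using mul_ne_zero h1Q htQ
  have hC : (-1 : ℂ) - t ^ 2 * Q ^ 2 ≠ 0 := by
    have : (-1 : ℂ) - t ^ 2 * Q ^ 2 = -(Q ^ 2 * (t ^ 2 - Q ^ 2) + (Q ^ 4 + 1)) := by ring
    rw [this, hQ4]
    simpa using mul_ne_zero (pow_ne_zero 2 hQ0) htQ
  field_simp [hA, hB, hC]
  have hD2 : t * t + 1 - (1 - t * t) * Q ^ 2 ≠ 0 := by
    have : t * t + 1 - (1 - t * t) * Q ^ 2 = (1 + Q ^ 2) * (t ^ 2 - Q ^ 2) + (Q ^ 4 + 1) := by ring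
    rw [this, hQ4]
    simpa using mul_ne_zero h1Q htQ
  have hD2' : t ^ 2 + 1 - Q ^ 2 * (1 - t ^ 2) ≠ 0 := by convert hD2 using 1; ring
  have hC' : (-1 : ℂ) - Q ^ 2 * t ^ 2 ≠ 0 := by convert hC using 1; ring
  rw [neg_div', div_eq_div_iff hC' hD2']
  linear_combination (- t ^ 2 + t ^ 4) * hQ4

/-- The bubble-pop identity `Y† Y = B^{α1}_{α−1} · Id` for the splitting of the anyon
`(α−1)` into the pair `(α, 1)`: `Z(α)·Y(α) = (√2/(cot(πα/4) − 1))·I₄`. -/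
theorem bubble_pop (α : ℝ)
    (h1 : ∀ k : ℤ, α ≠ 4 * k) (h2 : ∀ k : ℤ, α ≠ 1 + 4 * k) :
    Zmat α * Ymat α =
      (((Real.sqrt 2 / (Real.cot (Real.pi * α / 4) - 1) : ℝ)) : ℂ) •
        (1 : Matrix (Fin 4) (Fin 4) ℂ) := by
  have ht2ne1 : qp (α : ℂ) ^ 2 ≠ 1 := by
    rw [qp_sq]
    intro h
    have h' : qp ((2 * α : ℝ) : ℂ) = 1 := by push_cast; exact h
    obtain ⟨n, hn⟩ := (qp_real_eq_one_iff _).1 h'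
    exact h1 n (by linarith)
  have ht2neI : qp (α : ℂ) ^ 2 ≠ I := by
    rw [qp_sq]
    intro h
    have h' : qp (2 * (α:ℂ)) = qp 2 := by rw [h, qp_two]
    have h'' : qp ((2 * α - 2 : ℝ) : ℂ) = 1 := by
      rw [show ((2 * α - 2 : ℝ) : ℂ) = 2 * (α:ℂ) - 2 by push_cast; ring]
      exact qp_eq_qp h'
    obtain ⟨n, hn⟩ := (qp_real_eq_one_iff _).1 h''
    exact h2 n (by linarith)
  set θ : ℝ := Real.pi * α / 4 with hθ
  set t : ℂ := qp (α : ℂ) with htdef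
  set Q : ℂ := qp 1 with hQdef
  have hQ2 : Q ^ 2 = I := qp_one_sq
  have ht0 : t ≠ 0 := qp_ne_zero _
  have hQ0 : Q ≠ 0 := qp_ne_zero _
  have hexp : Complex.exp ((θ : ℂ) * I) = t := by
    rw [htdef, qp]
    congr 1
    rw [hθ]
    push_cast
    try ring
  have hexp' : Complex.exp (-(θ : ℂ) * I) = t⁻¹ := by
    rw [← hexp, ← Complex.exp_neg]
    congr 1
    ring
  have hsinC : ((Real.sin θ : ℝ) : ℂ) = (t⁻¹ - t) * I / 2 := by
    rw [Complex.ofReal_sin, Complex.sin, hexp, hexp']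
  have hcosC : ((Real.cos θ : ℝ) : ℂ) = (t + t⁻¹) / 2 := by
    rw [Complex.ofReal_cos, Complex.cos, hexp, hexp']
  have hsin0 : Real.sin θ ≠ 0 := by
    intro h
    apply ht2ne1
    have h0 : (t⁻¹ - t) * I / 2 = 0 := by
      rw [← hsinC, h, Complex.ofReal_zero]
    have h1' : t⁻¹ - t = 0 := by
      rcases mul_eq_zero.1 (show (t⁻¹ - t) * I = 0 by linear_combination 2 * h0) with h' | h'
      · exact h'
      · exact absurd h' Complex.I_ne_zero
    have h2' : t⁻¹ = t := sub_eq_zero.1 h1'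
    rw [sq]
    nth_rewrite 1 [← h2']
    rw [inv_mul_cancel₀ ht0]
  have hcs0 : Real.cos θ - Real.sin θ ≠ 0 := by
    intro h
    apply ht2neI
    have h0 : (t + t⁻¹) / 2 - (t⁻¹ - t) * I / 2 = 0 := by
      rw [← hsinC, ← hcosC, ← Complex.ofReal_sub, h, Complex.ofReal_zero]
    have h0' : (t * t + 1) - (1 - t * t) * I = 0 := by
      have := congrArg (fun z => z * (2 * t)) h0
      simp only [zero_mul] at this
      field_simp at this
      linear_combination this
    have h1' : (1 + I) * t ^ 2 = (1 + I) * I := by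
      linear_combination h0' - Complex.I_sq
    have hne : (1 : ℂ) + I ≠ 0 := by
      intro hc
      have hI : I = -1 := by linear_combination hc
      have := Complex.I_sq
      rw [hI] at this
      norm_num at this
    exact mul_left_cancel₀ hne h1'
  have hcsC : ((Real.cos θ : ℝ) : ℂ) - ((Real.sin θ : ℝ) : ℂ) ≠ 0 := by
    rw [← Complex.ofReal_sub]
    exact Complex.ofReal_ne_zero.2 hcs0
  have hrhs : ((Real.sqrt 2 / (Real.cot θ - 1) : ℝ) : ℂ) =
      ((Real.sqrt 2 : ℝ) : ℂ) * ((Real.sin θ : ℝ) : ℂ) /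
        (((Real.cos θ : ℝ) : ℂ) - ((Real.sin θ : ℝ) : ℂ)) := by
    have hr : Real.sqrt 2 / (Real.cot θ - 1) =
        Real.sqrt 2 * Real.sin θ / (Real.cos θ - Real.sin θ) := by
      rw [Real.cot_eq_cos_div_sin]
      rw [div_sub' hsin0, div_div_eq_mul_div]
      ring_nf
    rw [hr]
    push_cast
    ring
  have e1 : qp ((α : ℂ) + 1) = t * Q := by rw [qp_add]
  have e3' : qp (3 : ℂ) = I * Q := by
    rw [show (3:ℂ) = 2 + 1 by norm_num, qp_add, qp_two]
  have e2 : qp (3 - (α : ℂ)) = I * Q * t⁻¹ := by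
    rw [show (3 : ℂ) - α = 3 + (-α) by ring, qp_add, e3', qp_neg]
  have e3 : qp (2 * (α : ℂ) + 2) = t ^ 2 * I := by
    rw [qp_add, ← qp_sq, qp_two]
  have e4 : qp (2 - (α : ℂ)) = I * t⁻¹ := by
    rw [show (2 : ℂ) - α = 2 + (-α) by ring, qp_add, qp_two, qp_neg]
  have e5 : qp (-(α : ℂ)) = t⁻¹ := qp_neg _
  have d1 : t * Q - I * Q * t⁻¹ ≠ 0 := by
    intro h
    apply ht2neI
    field_simp at h
    have := mul_right_cancel₀ hQ0 (show (t * t) * Q = I * Q by linear_combination h)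
    linear_combination this
  have d2 : qp 4 - t ^ 2 * I ≠ 0 := by
    rw [qp_four]
    intro h
    apply ht2neI
    linear_combination I * h + t ^ 2 * Complex.I_sq
  ext i j
  fin_cases i <;> fin_cases j <;>
    simp [Zmat, Ymat, Matrix.mul_apply, Fin.sum_univ_succ, Matrix.one_apply,
      Matrix.smul_apply, e1, e2, e3, e4, e5, qp_two, qp_four, qp_six,
      ← htdef, ← hQdef, hrhs, hsinC, hcosC, qp_sqrt2, ← hθ]
  · exact G1 t Q ht0 hQ0 hQ2 ht2neI
  · exact G2 t Q ht0 hQ0 hQ2 ht2neI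
  · exact G3 t Q ht0 hQ0 hQ2 ht2neI
  · exact G4 t Q ht0 hQ0 hQ2 ht2neI
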